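/- Let f ∈ K⟨⟨e0,e1⟩⟩ satisfy f[w ⧢ e0] = 0 and f[w ⧢ e1] = 0 for every word w (this holds for instance for every f ∈ Π̃(K), and for every f that is primitive, i.e. f[w ⧢ w'] = 0 for all nonempty words w, w'). Then for all integers n ≥ d ≥ 1, the ℤ-submodule of K generated by the coefficients f[w] over all words w of weight n and depth d is generated by the coefficients f[e0^{s_d−1} e1 e0^{s_{d−1}−1} e1 ⋯ e0^{s_1−1} e1] over all tuples s_d,…,s_1 ≥ 1 with s_d ≥ 2 and s_d+⋯+s_1 = n. -/

import Mathlib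

/-! Infrastructure: noncommutative formal power series in two letters `e0, e1`,
their ring structure, exponential, inverse, substitution, shuffle products,
and the various words and submodules of coefficients used in the statements. -/

/-- Words over the alphabet `{e0, e1}`: lists over `Fin 2` (`0` is `e0`, `1` is `e1`),
read from left to right. -/
abbrev Word : Type := List (Fin 2)

/-- The depth of a word: its number of letters `e1`. -/
def depth (w : Word) : ℕ := w.count 1

/-- Noncommutative formal power series in `e0, e1` over `K`, encoded by their
coefficient functions on words. -/
def NCS (K : Type*) : Type _ := Word → K

namespace NCS

variable {K : Type*} [CommRing K]

instance : AddCommGroup (NCS K) := Pi.addCommGroup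
instance : SMul K (NCS K) := ⟨fun c f => fun w => c * f w⟩
instance : One (NCS K) := ⟨fun w => if w = [] then 1 else 0⟩
/-- Multiplication of noncommutative power series (Cauchy product on words). -/
instance : Mul (NCS K) := ⟨fun f g => fun w =>
  ∑ i ∈ Finset.range (w.length + 1), f (w.take i) * g (w.drop i)⟩

lemma mul_apply (f g : NCS K) (w : Word) :
    (f * g) w = ∑ i ∈ Finset.range (w.length + 1), f (w.take i) * g (w.drop i) := rfl

lemma add_apply (f g : NCS K) (w : Word) : (f + g) w = f w + g w := rfl

lemma smul_apply (c : K) (f : NCS K) (w : Word) : (c • f) w = c * f w := rfl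

lemma zero_apply (w : Word) : (0 : NCS K) w = 0 := rfl

lemma one_apply (w : Word) : (1 : NCS K) w = if w = [] then 1 else 0 := rfl

/-- Left shift of the coefficient function by a letter. -/
def shift (a : Fin 2) (f : NCS K) : NCS K := fun w => f (a :: w)

lemma mul_nil (f g : NCS K) : (f * g) [] = f [] * g [] := by
  simp [mul_apply]

lemma cons_mul (f g : NCS K) (a : Fin 2) (w : Word) :
    (f * g) (a :: w) = f [] * g (a :: w) + (shift a f * g) w := by
  show (∑ i ∈ Finset.range (w.length + 1 + 1), f ((a :: w).take i) * g ((a :: w).drop i)) = _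
  rw [Finset.sum_range_succ']
  simp only [List.take_succ_cons, List.drop_succ_cons, List.take_zero, List.drop_zero]
  rw [add_comm]
  rfl

private lemma zero_mul' (f : NCS K) : 0 * f = 0 := by
  funext w; simp [mul_apply, zero_apply]

private lemma mul_zero' (f : NCS K) : f * 0 = 0 := by
  funext w; simp [mul_apply, zero_apply]

private lemma add_mul' (f g h : NCS K) : (f + g) * h = f * h + g * h := by
  funext w
  simp [mul_apply, add_apply, add_mul, Finset.sum_add_distrib]

private lemma mul_add' (f g h : NCS K) : f * (g + h) = f * g + f * h := by
  funext w
  simp [mul_apply, add_apply, mul_add, Finset.sum_add_distrib]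

private lemma smul_mul' (c : K) (f g : NCS K) : (c • f) * g = c • (f * g) := by
  funext w
  simp [mul_apply, smul_apply, Finset.mul_sum, mul_assoc]

private lemma one_mul' (f : NCS K) : 1 * f = f := by
  funext w
  cases w with
  | nil => simp [mul_nil, one_apply]
  | cons a w =>
      have : shift a (1 : NCS K) = 0 := by
        funext v; show (if (a :: v : Word) = [] then (1:K) else 0) = 0; simp
      rw [cons_mul, this, zero_mul', zero_apply, one_apply]
      simp

private lemma mul_one' (f : NCS K) : f * 1 = f := by
  funext w
  induction w generalizing f with
  | nil => simp [mul_nil, one_apply]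
  | cons a w ih =>
      rw [cons_mul, one_apply, ih]
      simp [shift]

private lemma mul_assoc' (f g h : NCS K) : f * g * h = f * (g * h) := by
  funext w
  induction w generalizing f g h with
  | nil =>
      simp only [mul_nil]
      ring
  | cons a w ih =>
      have h1 : shift a (f * g) = f [] • shift a g + shift a f * g := by
        funext v
        show (f * g) (a :: v) = _
        rw [cons_mul]
        rfl
      have e1 : (f * g * h) (a :: w)
          = f [] * g [] * h (a :: w)
            + (f [] * ((shift a g * h) w) + ((shift a f * g) * h) w) := by
        rw [cons_mul, h1, add_mul', smul_mul', mul_nil, add_apply, smul_apply]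
      have e2 : (f * (g * h)) (a :: w)
          = f [] * (g [] * h (a :: w) + (shift a g * h) w)
            + (shift a f * (g * h)) w := by
        rw [cons_mul, cons_mul]
      rw [e1, e2, ih]
      ring

instance instRing : Ring (NCS K) where
  __ := (inferInstance : AddCommGroup (NCS K))
  __ := (inferInstance : Mul (NCS K))
  __ := (inferInstance : One (NCS K))
  left_distrib := mul_add'
  right_distrib := add_mul'
  zero_mul := zero_mul'
  mul_zero := mul_zero'
  mul_assoc := mul_assoc'
  one_mul := one_mul'
  mul_one := mul_one'

/-- The inverse of a noncommutative power series, given by the geometric series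
`Σ_k (1-f)^k`.  For `f` with constant coefficient `1` (the only case used) this is
the genuine two-sided multiplicative inverse of `f`. -/
instance : Inv (NCS K) :=
  ⟨fun f => fun w => ∑ k ∈ Finset.range (w.length + 1), ((1 - f) ^ k) w⟩

/-- The series `e0`. -/
def E0 : NCS K := fun w => if w = [0] then 1 else 0

/-- The series `e1`. -/
def E1 : NCS K := fun w => if w = [1] then 1 else 0

/-- The series `e∞ = -e0 - e1`. -/
def Einf : NCS K := -E0 - E1

/-- The finite set of all words of length at most `n`. -/
def wordsLe (n : ℕ) : Finset Word :=
  (Finset.range (n + 1)).biUnion fun k =>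
    Finset.image (fun t : Fin k → Fin 2 => List.ofFn t) Finset.univ

/-- The product of the letters of `w` after the substitution `e0 ↦ a`, `e1 ↦ b`. -/
def prodWord (a b : NCS K) (w : Word) : NCS K :=
  (w.map fun c => if c = 0 then a else b).prod

/-- Substitution `f(e0,e1) ↦ f(a,b)`: the image of `f` under the continuous algebra
endomorphism determined by `e0 ↦ a`, `e1 ↦ b` (for `a`, `b` with zero constant term). -/
def subst (a b : NCS K) (f : NCS K) : NCS K :=
  fun v => ∑ w ∈ wordsLe v.length, f w * prodWord a b w v

/-- The exponential series `exp a = Σ_k a^k/k!` (for `a` with zero constant term). -/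
def expS {K : Type*} [Field K] (a : NCS K) : NCS K :=
  fun w => ∑ k ∈ Finset.range (w.length + 1), (Nat.factorial k : K)⁻¹ * (a ^ k) w

end NCS

/-- The list of all shuffles of two words. -/
def shuffle : Word → Word → List Word
  | [], v => [v]
  | a :: u, [] => [a :: u]
  | a :: u, b :: v =>
      ((shuffle u (b :: v)).map fun w => a :: w) ++ ((shuffle (a :: u) v).map fun w => b :: w)
termination_by u v => u.length + v.length

namespace NCS

variable {K : Type*} [CommRing K]

/-- `f[u ⧢ v]`: the coefficient function `f` applied linearly to the shuffle `u ⧢ v`. -/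
def shufApply (f : NCS K) (u v : Word) : K := ((shuffle u v).map fun w => f w).sum

/-- `f ∈ Π(K)`: group-like elements, i.e. solutions of the shuffle equations with
constant coefficient `1`. -/
def IsPi (f : NCS K) : Prop :=
  f [] = 1 ∧ ∀ u v : Word, shufApply f u v = f u * f v

/-- `f ∈ Π̃(K)`: elements of `Π(K)` whose weight-one coefficients vanish. -/
def IsPiT (f : NCS K) : Prop := IsPi f ∧ f [0] = 0 ∧ f [1] = 0

end NCS

/-- The block `e0^{k-1} e1`. -/
def blk (k : ℕ) : Word := List.replicate (k - 1) 0 ++ [1]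

/-- The word `e0^{s_d-1} e1 e0^{s_{d-1}-1} e1 ⋯ e0^{s_1-1} e1` (only the values
`s 1, …, s d` matter). -/
def wordW (d : ℕ) (s : ℕ → ℕ) : Word :=
  (List.ofFn fun j : Fin d => blk (s (d - (j : ℕ)))).flatten

/-- The word `e0^{s_d-1} e1 ⋯ e0^{s_1-1} e1 e0^{s_0-1}`. -/
def word1 (d : ℕ) (s : ℕ → ℕ) : Word :=
  wordW d s ++ List.replicate (s 0 - 1) 0

/-- The word `W(a_d; a_{d-1}, …, a_1; a_0) = e0^{a_d} e1 e0^{a_{d-1}} e1 ⋯ e1 e0^{a_1} e1 e0^{a_0}`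
of depth `d`. -/
def wordA (d : ℕ) (a : ℕ → ℕ) : Word :=
  List.replicate (a d) 0 ++
    (List.ofFn fun j : Fin d => (1 : Fin 2) :: List.replicate (a (d - 1 - (j : ℕ))) 0).flatten

/-- `binom (−s, l) = (−1)^l · binom (s+l−1, l)`. -/
def nbinom (s l : ℕ) : ℤ := (-1) ^ l * ((s + l - 1).choose l)

/-- Extension of a tuple `t : Fin d → ℕ` to `ℕ → ℕ` so that index `i ∈ {1, …, d}`
reads `t (i-1)` and all other indices read `0`. -/
def extFin (d : ℕ) (t : Fin d → ℕ) : ℕ → ℕ :=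
  fun i => if h : i - 1 < d ∧ 1 ≤ i then t ⟨i - 1, h.1⟩ else 0

namespace NCS

/-- The filtration `Fil_s(C_μ) = Σ_{s1+s2=s} (1/s1!)·ℤ·(μ/2)^{s2}` of `ℚ ⊆ K`
(`μ ≠ 0` case; for `μ = 0` it reduces to `ℤ ⊆ K`). -/
def Fil {K : Type*} [Field K] (μ : K) (s : ℕ) : Submodule ℤ K :=
  Submodule.span ℤ
    {x : K | ∃ s1 s2 : ℕ, s1 + s2 = s ∧ x = (Nat.factorial s1 : K)⁻¹ * (μ / 2) ^ s2}

variable {K : Type*} [CommRing K]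

/-- `M_D(f)`: the ℤ-submodule of `K` generated by the products `f[w_1]⋯f[w_k]`, `k ≥ 1`,
where each `w_j` is a word of depth between `1` and `D`. -/
def Msub (D : ℕ) (f : NCS K) : Submodule ℤ K :=
  Submodule.span ℤ
    {x : K | ∃ l : List Word, l ≠ [] ∧ (∀ w ∈ l, 1 ≤ depth w ∧ depth w ≤ D) ∧
      x = (l.map fun w => f w).prod}

/-- `M^μ_D(f)`: as `Msub` but with coefficients in the filtration `Fil`. -/
def MsubFil {K : Type*} [Field K] (μ : K) (D : ℕ) (f : NCS K) : Submodule ℤ K :=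
  Submodule.span ℤ
    {x : K | ∃ (l : List Word) (c : K), l ≠ [] ∧
      (∀ w ∈ l, 1 ≤ depth w ∧ depth w ≤ D) ∧
      c ∈ Fil μ ((l.map List.length).sum) ∧
      x = c * (l.map fun w => f w).prod}

/-- The one-dimensional associator equations with `μ = 0`: duality (2-cycle), 3-cycle,
and the special automorphism equation. -/
def OneDim0 (Φ : NCS K) : Prop :=
  Φ * subst E1 E0 Φ = 1 ∧
  subst Einf E0 Φ * subst E1 Einf Φ * Φ = 1 ∧
  E0 + Φ⁻¹ * E1 * Φ + (subst E0 Einf Φ)⁻¹ * Einf * subst E0 Einf Φ = 0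

/-- The one-dimensional associator equations with coupling constant `μ ≠ 0`: duality,
hexagon, and the equation of special automorphisms. -/
def OneDimMu {K : Type*} [Field K] (μ : K) (Φ : NCS K) : Prop :=
  subst E1 E0 Φ = Φ⁻¹ ∧
  expS ((μ / 2) • E0) * subst Einf E0 Φ * expS ((μ / 2) • Einf) *
      subst E1 Einf Φ * expS ((μ / 2) • E1) * Φ = 1 ∧
  Φ⁻¹ * expS ((-μ) • E1) * Φ * expS ((-μ) • E0) =
    expS ((μ / 2) • E0) * (subst E0 Einf Φ)⁻¹ * expS (μ • Einf) *
      subst E0 Einf Φ * expS ((-(μ / 2)) • E0)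

end NCS

/-! Auxiliary lemmas for `stmt_2`. -/

lemma shuffle_nil_left (v : Word) : shuffle [] v = [v] := by simp [shuffle]
lemma shuffle_nil_right (u : Word) : shuffle u [] = [u] := by cases u <;> simp [shuffle]
lemma shuffle_cons_cons (a b : Fin 2) (u v : Word) :
    shuffle (a :: u) (b :: v)
      = ((shuffle u (b :: v)).map fun w => a :: w) ++ ((shuffle (a :: u) v).map fun w => b :: w) := by
  rw [shuffle]

lemma mem_shuffle_length : ∀ (u v x : Word), x ∈ shuffle u v → x.length = u.length + v.length := by
  intro u
  induction u with
  | nil => intro v x hx; rw [shuffle_nil_left] at hx; simp at hx; subst hx; simp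
  | cons a u ihu =>
    intro v
    induction v with
    | nil => intro x hx; rw [shuffle_nil_right] at hx; simp at hx; subst hx; simp
    | cons b v ihv =>
      intro x hx
      rw [shuffle_cons_cons] at hx
      rcases List.mem_append.1 hx with h | h
      · obtain ⟨y, hy, rfl⟩ := List.mem_map.1 h
        have := ihu _ _ hy; simp at this ⊢; omega
      · obtain ⟨y, hy, rfl⟩ := List.mem_map.1 h
        have := ihv _ hy; simp at this ⊢; omega

lemma mem_shuffle_count (c : Fin 2) : ∀ (u v x : Word), x ∈ shuffle u v → x.count c = u.count c + v.count c := by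
  intro u
  induction u with
  | nil => intro v x hx; rw [shuffle_nil_left] at hx; simp at hx; subst hx; simp
  | cons a u ihu =>
    intro v
    induction v with
    | nil => intro x hx; rw [shuffle_nil_right] at hx; simp at hx; subst hx; simp
    | cons b v ihv =>
      intro x hx
      rw [shuffle_cons_cons] at hx
      rcases List.mem_append.1 hx with h | h
      · obtain ⟨y, hy, rfl⟩ := List.mem_map.1 h
        have := ihu _ _ hy; simp [List.count_cons] at this ⊢; omega
      · obtain ⟨y, hy, rfl⟩ := List.mem_map.1 h
        have := ihv _ hy; simp [List.count_cons] at this ⊢; omega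

lemma mem_shuffle_ne_nil (u v x : Word) (hu : u ≠ [] ∨ v ≠ []) (hx : x ∈ shuffle u v) : x ≠ [] := by
  have := mem_shuffle_length u v x hx
  intro h; subst h; simp at this
  rcases hu with h | h
  · exact h (List.length_eq_zero_iff.1 (by omega))
  · exact h (List.length_eq_zero_iff.1 (by omega))

lemma mem_shuffle_getLast? : ∀ (u v x : Word), x ∈ shuffle u v →
    x.getLast? = u.getLast? ∨ x.getLast? = v.getLast? := by
  intro u
  induction u with
  | nil => intro v x hx; rw [shuffle_nil_left] at hx; simp at hx; subst hx; right; rfl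
  | cons a u ihu =>
    intro v
    induction v with
    | nil => intro x hx; rw [shuffle_nil_right] at hx; simp at hx; subst hx; left; rfl
    | cons b v ihv =>
      intro x hx
      rw [shuffle_cons_cons] at hx
      rcases List.mem_append.1 hx with h | h
      · obtain ⟨y, hy, rfl⟩ := List.mem_map.1 h
        have hyne : y ≠ [] := mem_shuffle_ne_nil _ _ _ (Or.inr (by simp)) hy
        have hlast : (a :: y).getLast? = y.getLast? := by
          cases y with | nil => exact absurd rfl hyne | cons c y => simp [List.getLast?_cons_cons]
        rcases ihu _ _ hy with h' | h'
        · cases u with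
          | nil =>
            exfalso
            rw [shuffle_nil_left] at hy; simp at hy; subst hy; simp at h'
          | cons a' u' => left; rw [hlast, h']; simp [List.getLast?_cons_cons]
        · right; rw [hlast, h']
      · obtain ⟨y, hy, rfl⟩ := List.mem_map.1 h
        have hyne : y ≠ [] := mem_shuffle_ne_nil _ _ _ (Or.inl (by simp)) hy
        have hlast : (b :: y).getLast? = y.getLast? := by
          cases y with | nil => exact absurd rfl hyne | cons c y => simp [List.getLast?_cons_cons]
        rcases ihv _ hy with h' | h'
        · left; rw [hlast, h']
        · cases v with
          | nil =>
            exfalso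
            rw [shuffle_nil_right] at hy; simp at hy; subst hy; simp at h'
          | cons b' v' => right; rw [hlast, h']; simp [List.getLast?_cons_cons]

section Ssec
variable {K : Type*} [Field K] [CharZero K]
set_option linter.unusedSectionVars false

/-- Sum of `f` over a shuffle. -/
def shufSum (f : Word → K) (u v : Word) : K := ((shuffle u v).map f).sum

lemma S_nil_left (f : Word → K) (v : Word) : shufSum f [] v = f v := by
  simp [shufSum, shuffle_nil_left]

lemma S_nil_right (f : Word → K) (u : Word) : shufSum f u [] = f u := by
  simp [shufSum, shuffle_nil_right]

lemma sum_map_add (l : List Word) (g h : Word → K) :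
    (l.map fun x => g x + h x).sum = (l.map g).sum + (l.map h).sum := by
  induction l with
  | nil => simp
  | cons a l ih => simp [ih]; ring

lemma S_cons_cons (f : Word → K) (a b : Fin 2) (u v : Word) :
    shufSum f (a :: u) (b :: v)
      = shufSum (fun x => f (a :: x)) u (b :: v) + shufSum (fun x => f (b :: x)) (a :: u) v := by
  simp [shufSum, shuffle_cons_cons, List.map_map, Function.comp_def]

lemma S_add (f g : Word → K) (u v : Word) :
    shufSum (fun x => f x + g x) u v = shufSum f u v + shufSum g u v := by
  simp [shufSum, sum_map_add]

lemma S_congr {f g : Word → K} (h : ∀ x, f x = g x) (u v : Word) : shufSum f u v = shufSum g u v := by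
  have : f = g := funext h
  rw [this]

lemma S_assoc_aux : ∀ (N : ℕ) (f : Word → K) (u v w : Word),
    u.length + v.length + w.length ≤ N →
    shufSum (fun x => shufSum f x w) u v = shufSum (fun y => shufSum f u y) v w := by
  intro N
  induction N with
  | zero =>
    intro f u v w h
    have hu : u = [] := List.length_eq_zero_iff.1 (by omega)
    subst hu
    simp [S_nil_left]
  | succ N ih =>
    intro f u v w h
    cases u with
    | nil => simp [S_nil_left]
    | cons a u =>
      cases v with
      | nil => simp [S_nil_left, S_nil_right]
      | cons b v =>
        cases w with
        | nil => simp [S_nil_right]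
        | cons c w =>
          rw [S_cons_cons]
          have e1 : shufSum (fun x => shufSum f (a :: x) (c :: w)) u (b :: v)
              = shufSum (fun x => shufSum (fun y => f (a :: y)) x (c :: w)) u (b :: v)
                + shufSum (fun x => shufSum (fun y => f (c :: y)) (a :: x) w) u (b :: v) := by
            rw [← S_add]
            exact S_congr (fun x => S_cons_cons f a c x w) u (b :: v)
          have e2 : shufSum (fun x => shufSum f (b :: x) (c :: w)) (a :: u) v
              = shufSum (fun x => shufSum (fun y => f (b :: y)) x (c :: w)) (a :: u) v
                + shufSum (fun x => shufSum (fun y => f (c :: y)) (b :: x) w) (a :: u) v := by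
            rw [← S_add]
            exact S_congr (fun x => S_cons_cons f b c x w) (a :: u) v
          rw [e1, e2]
          -- reassemble the two (f∘c) sums
          have e3 : shufSum (fun x => shufSum (fun y => f (c :: y)) (a :: x) w) u (b :: v)
                + shufSum (fun x => shufSum (fun y => f (c :: y)) (b :: x) w) (a :: u) v
              = shufSum (fun x => shufSum (fun y => f (c :: y)) x w) (a :: u) (b :: v) := by
            rw [S_cons_cons]
          have h1 : u.length + (b :: v).length + (c :: w).length ≤ N := by simp at h ⊢; omega
          have h2 : (a :: u).length + v.length + (c :: w).length ≤ N := by simp at h ⊢; omega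
          have h3 : (a :: u).length + (b :: v).length + w.length ≤ N := by simp at h ⊢; omega
          rw [show shufSum (fun x => shufSum (fun y => f (a :: y)) x (c :: w)) u (b :: v)
                + shufSum (fun x => shufSum (fun y => f (c :: y)) (a :: x) w) u (b :: v)
                + (shufSum (fun x => shufSum (fun y => f (b :: y)) x (c :: w)) (a :: u) v
                  + shufSum (fun x => shufSum (fun y => f (c :: y)) (b :: x) w) (a :: u) v)
              = shufSum (fun x => shufSum (fun y => f (a :: y)) x (c :: w)) u (b :: v)
                + shufSum (fun x => shufSum (fun y => f (b :: y)) x (c :: w)) (a :: u) v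
                + (shufSum (fun x => shufSum (fun y => f (c :: y)) (a :: x) w) u (b :: v)
                  + shufSum (fun x => shufSum (fun y => f (c :: y)) (b :: x) w) (a :: u) v) by ring]
          rw [e3, ih _ _ _ _ h1, ih _ _ _ _ h2, ih _ _ _ _ h3]
          -- now the right-hand side
          rw [show shufSum (fun y => shufSum f (a :: u) y) (b :: v) (c :: w)
              = shufSum (fun y => shufSum f (a :: u) (b :: y)) v (c :: w)
                + shufSum (fun y => shufSum f (a :: u) (c :: y)) (b :: v) w from S_cons_cons _ b c v w]
          have e4 : shufSum (fun y => shufSum f (a :: u) (b :: y)) v (c :: w)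
              = shufSum (fun y => shufSum (fun x => f (a :: x)) u (b :: y)) v (c :: w)
                + shufSum (fun y => shufSum (fun x => f (b :: x)) (a :: u) y) v (c :: w) := by
            rw [← S_add]
            exact S_congr (fun y => S_cons_cons f a b u y) v (c :: w)
          have e5 : shufSum (fun y => shufSum f (a :: u) (c :: y)) (b :: v) w
              = shufSum (fun y => shufSum (fun x => f (a :: x)) u (c :: y)) (b :: v) w
                + shufSum (fun y => shufSum (fun x => f (c :: x)) (a :: u) y) (b :: v) w := by
            rw [← S_add]
            exact S_congr (fun y => S_cons_cons f a c u y) (b :: v) w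
          rw [e4, e5]
          have e6 : shufSum (fun y => shufSum (fun x => f (a :: x)) u (b :: y)) v (c :: w)
                + shufSum (fun y => shufSum (fun x => f (a :: x)) u (c :: y)) (b :: v) w
              = shufSum (fun y => shufSum (fun x => f (a :: x)) u y) (b :: v) (c :: w) := by
            rw [S_cons_cons]
          rw [← e6]
          ring

lemma S_assoc (f : Word → K) (u v w : Word) :
    shufSum (fun x => shufSum f x w) u v = shufSum (fun y => shufSum f u y) v w :=
  S_assoc_aux (u.length + v.length + w.length) f u v w le_rfl

end Ssec

lemma shuffle_replicate_single (c : Fin 2) : ∀ k : ℕ,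
    shuffle (List.replicate k c) [c] = List.replicate (k+1) (List.replicate (k+1) c) := by
  intro k
  induction k with
  | zero => simp [shuffle_nil_left]
  | succ k ih =>
    rw [List.replicate_succ, shuffle_cons_cons, shuffle_nil_right, ih]
    simp only [List.map_replicate, List.map_cons, List.map_nil]
    rw [← List.replicate_succ, ← List.replicate_succ]
    rw [show (List.replicate (k+1+1) (List.replicate (k+1+1) c))
        = List.replicate (k+1) (List.replicate (k+1+1) c) ++ [List.replicate (k+1+1) c]
        from List.replicate_succ']
    rfl

section Ssec2
variable {K : Type*} [Field K] [CharZero K]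
set_option linter.unusedSectionVars false

lemma S_rep {f : Word → K} {c : Fin 2} (hc : ∀ w, shufSum f w [c] = 0) :
    ∀ k : ℕ, 1 ≤ k → ∀ u : Word, shufSum f u (List.replicate k c) = 0 := by
  intro k
  induction k with
  | zero => omega
  | succ k ih =>
    intro _ u
    rcases Nat.eq_or_lt_of_le (Nat.one_le_iff_ne_zero.2 (Nat.succ_ne_zero k)) with h1 | h1
    · have : k = 0 := by omega
      subst this
      simpa using hc u
    · have hk : 1 ≤ k := by omega
      have ha := S_assoc f u (List.replicate k c) [c]
      have hl : shufSum (fun x => shufSum f x [c]) u (List.replicate k c) = 0 := by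
        have : (fun x : Word => shufSum f x [c]) = fun _ : Word => (0 : K) := funext hc
        rw [this]
        simp [shufSum]
      rw [hl] at ha
      rw [show shufSum (fun y => shufSum f u y) (List.replicate k c) [c]
          = ((shuffle (List.replicate k c) [c]).map (fun y => shufSum f u y)).sum from rfl,
         shuffle_replicate_single] at ha
      simp only [List.map_replicate, List.sum_replicate] at ha
      rw [nsmul_eq_mul] at ha
      have hne : ((k+1 : ℕ) : K) ≠ 0 := Nat.cast_ne_zero.2 (by omega)
      rcases mul_eq_zero.1 ha.symm with h | h
      · exact absurd h hne
      · exact h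

end Ssec2

lemma tri0 : ∀ (p : Word) (k : ℕ), ∃ l : List Word,
    shuffle (p ++ [1]) (List.replicate k 0)
      = ((p ++ [1]) ++ List.replicate k 0) :: l ∧
    ∀ v ∈ l, ∃ (q : Word) (k' : ℕ), k' < k ∧ v = q ++ [1] ++ List.replicate k' 0 := by
  intro p
  induction p with
  | nil =>
    intro k
    induction k with
    | zero => exact ⟨[], by simp [shuffle_nil_right], by simp⟩
    | succ k ihk =>
      obtain ⟨l', hl', hprop'⟩ := ihk
      refine ⟨(0 :: ([1] ++ List.replicate k 0)) :: l'.map (fun v => 0 :: v), ?_, ?_⟩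
      · have hl'' : shuffle [1] (List.replicate k 0) = ([1] ++ List.replicate k 0) :: l' := by
          simpa using hl'
        rw [List.replicate_succ, show ([] : Word) ++ [1] = [1] from rfl, shuffle_cons_cons,
          shuffle_nil_left, hl'']
        simp [List.replicate_succ]
      · intro v hv
        rcases List.mem_cons.1 hv with rfl | hv
        · exact ⟨[0], k, by omega, by simp⟩
        · obtain ⟨y, hy, rfl⟩ := List.mem_map.1 hv
          obtain ⟨q, k', hk', rfl⟩ := hprop' y hy
          exact ⟨0 :: q, k', by omega, by simp⟩
  | cons a p ihp =>
    intro k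
    induction k with
    | zero => exact ⟨[], by simp [shuffle_nil_right], by simp⟩
    | succ k ihk =>
      obtain ⟨l₁, hl₁, hprop₁⟩ := ihp (k+1)
      obtain ⟨l₂, hl₂, hprop₂⟩ := ihk
      refine ⟨l₁.map (fun v => a :: v)
          ++ (0 :: (((a :: p) ++ [1]) ++ List.replicate k 0)) :: l₂.map (fun v => 0 :: v), ?_, ?_⟩
      · have e : shuffle ((a :: p) ++ [1]) (List.replicate (k+1) 0)
            = ((shuffle (p ++ [1]) (List.replicate (k+1) 0)).map fun w => a :: w)
              ++ ((shuffle ((a :: p) ++ [1]) (List.replicate k 0)).map fun w => (0 : Fin 2) :: w) := by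
          rw [show ((a :: p) ++ [1]) = a :: (p ++ [1]) from rfl,
            show (List.replicate (k+1) 0 : Word) = 0 :: List.replicate k 0 from rfl]
          exact shuffle_cons_cons a 0 (p ++ [1]) (List.replicate k 0)
        rw [e, hl₁, hl₂]
        simp
      · intro v hv
        rcases List.mem_append.1 hv with hv | hv
        · obtain ⟨y, hy, rfl⟩ := List.mem_map.1 hv
          obtain ⟨q, k', hk', rfl⟩ := hprop₁ y hy
          exact ⟨a :: q, k', hk', by simp⟩
        · rcases List.mem_cons.1 hv with rfl | hv
          · exact ⟨0 :: a :: p, k, by omega, by simp⟩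
          · obtain ⟨y, hy, rfl⟩ := List.mem_map.1 hv
            obtain ⟨q, k', hk', rfl⟩ := hprop₂ y hy
            exact ⟨0 :: q, k', by omega, by simp⟩

lemma tri1 : ∀ (j : ℕ) (q : Word), ∃ l : List Word,
    (shuffle (0 :: q) (List.replicate j 1)).Perm
      ((List.replicate j 1 ++ 0 :: q) :: l) ∧
    ∀ v ∈ l, ∃ (j' : ℕ) (q' : Word), j' < j ∧ v = List.replicate j' 1 ++ 0 :: q' := by
  intro j
  induction j with
  | zero => intro q; exact ⟨[], by simp [shuffle_nil_right], by simp⟩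
  | succ j ih =>
    intro q
    obtain ⟨l₂, hl₂, hprop₂⟩ := ih q
    refine ⟨(l₂.map fun v => 1 :: v) ++ (shuffle q (List.replicate (j+1) 1)).map (fun v => 0 :: v),
        ?_, ?_⟩
    · rw [List.replicate_succ, shuffle_cons_cons, ← List.replicate_succ]
      have p1 : ((shuffle (0 :: q) (List.replicate j 1)).map (fun w => (1:Fin 2) :: w)).Perm
          ((1 :: (List.replicate j 1 ++ 0 :: q)) :: (l₂.map fun v => 1 :: v)) := by
        have := hl₂.map (fun w => (1:Fin 2) :: w)
        simpa using this
      have : (1 :: (List.replicate j 1 ++ 0 :: q)) = List.replicate (j+1) 1 ++ 0 :: q := by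
        simp [List.replicate_succ]
      rw [this] at p1
      refine List.Perm.trans List.perm_append_comm ?_
      have p2 := p1.append_right ((shuffle q (List.replicate (j+1) 1)).map (fun w => (0:Fin 2) :: w))
      rw [List.cons_append] at p2
      exact p2
    · intro v hv
      rcases List.mem_append.1 hv with hv | hv
      · obtain ⟨y, hy, rfl⟩ := List.mem_map.1 hv
        obtain ⟨j', q', hj', rfl⟩ := hprop₂ y hy
        exact ⟨j'+1, q', by omega, by simp [List.replicate_succ]⟩
      · obtain ⟨y, hy, rfl⟩ := List.mem_map.1 hv
        exact ⟨0, y, by omega, by simp⟩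

lemma fin2_cases (c : Fin 2) : c = 0 ∨ c = 1 := by omega

lemma exists_split_last (w : Word) (hw : (1 : Fin 2) ∈ w) :
    ∃ (p : Word) (k : ℕ), w = p ++ [1] ++ List.replicate k 0 := by
  induction w using List.reverseRecOn with
  | nil => simp at hw
  | append_singleton w y ih =>
    rcases fin2_cases y with rfl | rfl
    · have hw' : (1 : Fin 2) ∈ w := by
        rcases List.mem_append.1 hw with h | h
        · exact h
        · simp at h
      obtain ⟨p, k, rfl⟩ := ih hw'
      exact ⟨p, k+1, by simp [List.replicate_succ']⟩
    · exact ⟨w, 0, by simp⟩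

lemma exists_split_first (w : Word) (hw : (1 : Fin 2) ∈ w) :
    ∃ (m : ℕ) (v : Word), w = List.replicate m 0 ++ 1 :: v := by
  induction w with
  | nil => simp at hw
  | cons a w ih =>
    rcases fin2_cases a with rfl | rfl
    · have hw' : (1 : Fin 2) ∈ w := by simpa using hw
      obtain ⟨m, v, rfl⟩ := ih hw'
      exact ⟨m+1, v, by simp [List.replicate_succ]⟩
    · exact ⟨0, w, by simp⟩

lemma exists_split_ones (w : Word) :
    ∃ (j : ℕ) (r : Word), w = List.replicate j 1 ++ r ∧ (r = [] ∨ ∃ q, r = 0 :: q) := by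
  induction w with
  | nil => exact ⟨0, [], by simp, Or.inl rfl⟩
  | cons a w ih =>
    rcases fin2_cases a with rfl | rfl
    · exact ⟨0, 0 :: w, by simp, Or.inr ⟨w, rfl⟩⟩
    · obtain ⟨j, r, rfl, hr⟩ := ih
      exact ⟨j+1, r, by simp [List.replicate_succ], hr⟩

lemma depth_append (u v : Word) : depth (u ++ v) = depth u + depth v := by
  simp [depth]

lemma depth_replicate_zero (k : ℕ) : depth (List.replicate k 0) = 0 := by
  simp [depth, List.count_replicate]

lemma depth_replicate_one (k : ℕ) : depth (List.replicate k 1) = k := by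
  simp [depth, List.count_replicate]

lemma blk_length {k : ℕ} (hk : 1 ≤ k) : (blk k).length = k := by
  simp [blk]; omega

lemma blk_depth (k : ℕ) : depth (blk k) = 1 := by
  simp [blk, depth, List.count_replicate]

lemma wordW_zero (s : ℕ → ℕ) : wordW 0 s = [] := by simp [wordW]

lemma wordW_succ (d : ℕ) (s : ℕ → ℕ) :
    wordW (d+1) s = blk (s (d+1)) ++ wordW d s := by
  unfold wordW
  rw [List.ofFn_succ]
  simp only [List.flatten_cons, Fin.val_zero, Nat.sub_zero, Fin.val_succ]
  congr 1
  exact congrArg List.flatten (congrArg List.ofFn (funext fun i =>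
    by rw [show d + 1 - ((i : ℕ) + 1) = d - (i : ℕ) by omega]))

lemma wordW_congr {d : ℕ} {s s' : ℕ → ℕ} (h : ∀ i, 1 ≤ i → i ≤ d → s i = s' i) :
    wordW d s = wordW d s' := by
  unfold wordW
  exact congrArg List.flatten (congrArg List.ofFn (funext fun j =>
    by have := j.isLt; rw [h (d - (j : ℕ)) (by omega) (by omega)]))

lemma wordW_length {d : ℕ} {s : ℕ → ℕ} (h : ∀ i, 1 ≤ i → i ≤ d → 1 ≤ s i) :
    (wordW d s).length = ∑ i ∈ Finset.Icc 1 d, s i := by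
  induction d with
  | zero => simp [wordW_zero]
  | succ d ih =>
    rw [wordW_succ, List.length_append, ih (fun i h1 h2 => h i h1 (by omega)),
      blk_length (h (d+1) (by omega) le_rfl), Finset.sum_Icc_succ_top (by omega)]
    ring

lemma wordW_depth (d : ℕ) (s : ℕ → ℕ) : depth (wordW d s) = d := by
  induction d with
  | zero => simp [wordW_zero, depth]
  | succ d ih => rw [wordW_succ, depth_append, blk_depth, ih]; ring

lemma mem_of_getLast?_one (v : Word) (hv : v.getLast? = some 1) : (1 : Fin 2) ∈ v := by
  induction v using List.reverseRecOn with
  | nil => simp at hv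
  | append_singleton w y ih =>
    rw [List.getLast?_concat] at hv
    simp at hv
    subst hv
    simp

lemma parseWord : ∀ (d : ℕ) (v : Word), depth v = d → v.getLast? = some 1 →
    ∃ s : ℕ → ℕ, (∀ i, 1 ≤ i → i ≤ d → 1 ≤ s i) ∧
      (∑ i ∈ Finset.Icc 1 d, s i) = v.length ∧ v = wordW d s := by
  intro d
  induction d with
  | zero =>
    intro v hd hl
    exfalso
    have h1 : (1 : Fin 2) ∈ v := mem_of_getLast?_one v hl
    have : 0 < depth v := by
      simp only [depth]
      exact List.count_pos_iff.2 h1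
    omega
  | succ d ih =>
    intro v hd hl
    have h1 : (1 : Fin 2) ∈ v := mem_of_getLast?_one v hl
    obtain ⟨m, v', rfl⟩ := exists_split_first v h1
    have hdv' : depth v' = d := by
      have := depth_append (List.replicate m 0) (1 :: v')
      rw [depth_replicate_zero] at this
      have h2 : depth (1 :: v') = 1 + depth v' := by simp [depth, List.count_cons]; ring
      omega
    cases d with
    | zero =>
      have hv' : v' = [] := by
        cases v' with
        | nil => rfl
        | cons a v'' =>
          exfalso
          have hlast : (a :: v'').getLast? = some 1 := by
            rw [List.getLast?_append_of_ne_nil _ (by simp : (1 :: a :: v'' : Word) ≠ []),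
              List.getLast?_cons_cons] at hl
            exact hl
          have : (1 : Fin 2) ∈ (a :: v'') := mem_of_getLast?_one _ hlast
          have : 0 < depth (a :: v'') := by
            simp only [depth]; exact List.count_pos_iff.2 this
          omega
      subst hv'
      refine ⟨fun _ => m + 1, fun i _ _ => Nat.le_add_left 1 m, ?_, ?_⟩
      · simp
      · show List.replicate m 0 ++ [1] = wordW (0 + 1) (fun _ => m + 1)
        rw [wordW_succ, wordW_zero]
        simp [blk]
    | succ d' =>
      have hv'ne : v' ≠ [] := by
        intro h; subst h; simp [depth] at hdv'
      have hlast' : v'.getLast? = some 1 := by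
        rw [List.getLast?_append_of_ne_nil _ (by simp : (1 :: v' : Word) ≠ [])] at hl
        cases v' with
        | nil => exact absurd rfl hv'ne
        | cons a v'' => rw [List.getLast?_cons_cons] at hl; exact hl
      obtain ⟨s', hs'1, hs'2, hs'3⟩ := ih v' hdv' hlast'
      refine ⟨Function.update s' (d' + 1 + 1) (m + 1), ?_, ?_, ?_⟩
      · intro i hi1 hi2
        by_cases h : i = d' + 1 + 1
        · subst h; rw [Function.update_self]; omega
        · rw [Function.update_of_ne h]; exact hs'1 i hi1 (by omega)
      · rw [Finset.sum_Icc_succ_top (by omega : 1 ≤ d' + 1 + 1), Function.update_self]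
        rw [show (∑ i ∈ Finset.Icc 1 (d'+1), Function.update s' (d'+1+1) (m+1) i)
            = ∑ i ∈ Finset.Icc 1 (d'+1), s' i from Finset.sum_congr rfl fun i hi => by
          simp at hi; rw [Function.update_of_ne (by omega)]]
        rw [hs'2]
        simp only [List.length_append, List.length_replicate, List.length_cons]
        omega
      · rw [wordW_succ, Function.update_self,
          wordW_congr (s' := s') (fun i hi1 hi2 => Function.update_of_ne (by omega) _ _), ← hs'3]
        simp [blk, List.append_assoc]

section Main
variable {K : Type*} [Field K] [CharZero K]
set_option linter.unusedSectionVars false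

lemma step1 (f : Word → K) (hf0 : ∀ w : Word, shufSum f w [0] = 0) (n d : ℕ) :
    ∀ (k : ℕ) (p : Word), (p ++ [1] ++ List.replicate k 0).length = n →
      depth (p ++ [1] ++ List.replicate k 0) = d →
      f (p ++ [1] ++ List.replicate k 0) ∈
        Submodule.span ℤ {x : K | ∃ v : Word,
          v.length = n ∧ depth v = d ∧ v.getLast? = some 1 ∧ x = f v} := by
  intro k
  induction k using Nat.strong_induction_on with
  | _ k ih =>
    intro p hlen hdep
    cases k with
    | zero =>
      apply Submodule.subset_span
      exact ⟨p ++ [1], by simpa using hlen, by simpa using hdep,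
        List.getLast?_concat, by simp⟩
    | succ k' =>
      obtain ⟨l, hl, hprop⟩ := tri0 p (k'+1)
      have hrel : ((shuffle (p ++ [1]) (List.replicate (k'+1) 0)).map f).sum = 0 :=
        S_rep hf0 (k'+1) (by omega) _
      rw [hl, List.map_cons, List.sum_cons] at hrel
      have hfw : f (p ++ [1] ++ List.replicate (k'+1) 0) = -((l.map f).sum) := by
        exact eq_neg_of_add_eq_zero_left hrel
      rw [hfw]
      apply neg_mem
      apply list_sum_mem
      intro x hx
      obtain ⟨v, hv, rfl⟩ := List.mem_map.1 hx
      have hvmem : v ∈ shuffle (p ++ [1]) (List.replicate (k'+1) 0) := by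
        rw [hl]; exact List.mem_cons_of_mem _ hv
      have hvlen : v.length = n := by
        have := mem_shuffle_length _ _ _ hvmem
        simp only [List.length_append, List.length_replicate, List.length_cons] at hlen this ⊢
        omega
      have hvdep : depth v = d := by
        have := mem_shuffle_count 1 _ _ _ hvmem
        simp only [depth] at hdep this ⊢
        rw [List.count_append, List.count_replicate] at hdep
        simp only [List.count_replicate] at this
        omega
      obtain ⟨q, k'', hk'', rfl⟩ := hprop v hv
      exact ih k'' (by omega) q hvlen hvdep

lemma step2 (f : Word → K) (hf1 : ∀ w : Word, shufSum f w [1] = 0) (n d : ℕ)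
    (hd : 1 ≤ d) (hn : d ≤ n) :
    ∀ (j : ℕ) (q : Word),
      (List.replicate j 1 ++ 0 :: q).length = n →
      depth (List.replicate j 1 ++ 0 :: q) = d →
      (0 :: q : Word).getLast? = some 1 →
      f (List.replicate j 1 ++ 0 :: q) ∈
        Submodule.span ℤ {x : K | ∃ s : ℕ → ℕ,
          (∀ i, 1 ≤ i → i ≤ d → 1 ≤ s i) ∧ 2 ≤ s d ∧
          (∑ i ∈ Finset.Icc 1 d, s i) = n ∧ x = f (wordW d s)} := by
  intro j
  induction j using Nat.strong_induction_on with
  | _ j ih =>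
    intro q hlen hdep hlast
    cases j with
    | zero =>
      simp only [List.replicate, List.nil_append] at hlen hdep ⊢
      obtain ⟨s, hs1, hs2, hs3⟩ := parseWord d (0 :: q) hdep hlast
      have hsd2 : 2 ≤ s d := by
        have hsd1 : 1 ≤ s d := hs1 d hd le_rfl
        rcases Nat.lt_or_ge (s d) 2 with h2 | h2
        · exfalso
          have hsd : s d = 1 := by omega
          cases d with
          | zero => omega
          | succ d' =>
            rw [wordW_succ, hsd] at hs3
            simp [blk] at hs3
        · exact h2
      exact Submodule.subset_span ⟨s, hs1, hsd2, by rw [hs2, hlen], by rw [hs3]⟩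
    | succ j' =>
      obtain ⟨l, hperm, hprop⟩ := tri1 (j'+1) q
      have hrel : ((shuffle (0 :: q) (List.replicate (j'+1) 1)).map f).sum = 0 :=
        S_rep hf1 (j'+1) (by omega) _
      rw [List.Perm.sum_eq (hperm.map f), List.map_cons, List.sum_cons] at hrel
      have hfw : f (List.replicate (j'+1) 1 ++ 0 :: q) = -((l.map f).sum) := by
        exact eq_neg_of_add_eq_zero_left hrel
      rw [hfw]
      apply neg_mem
      apply list_sum_mem
      intro x hx
      obtain ⟨v, hv, rfl⟩ := List.mem_map.1 hx
      have hvmem : v ∈ shuffle (0 :: q) (List.replicate (j'+1) 1) :=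
        hperm.symm.subset (List.mem_cons_of_mem _ hv)
      have hvlen : v.length = n := by
        have := mem_shuffle_length _ _ _ hvmem
        simp only [List.length_append, List.length_replicate, List.length_cons] at hlen this ⊢
        omega
      have hvdep : depth v = d := by
        have := mem_shuffle_count 1 _ _ _ hvmem
        simp only [depth] at hdep this ⊢
        rw [List.count_append, List.count_replicate] at hdep
        simp only [List.count_replicate] at this
        omega
      have hvlast : v.getLast? = some 1 := by
        rcases mem_shuffle_getLast? _ _ _ hvmem with h | h
        · rw [h]; exact hlast
        · rw [h, show (List.replicate (j'+1) 1 : Word)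
              = List.replicate j' 1 ++ [1] from List.replicate_succ',
            List.getLast?_concat]
      obtain ⟨j'', q'', hj'', rfl⟩ := hprop v hv
      have hlast'' : (0 :: q'' : Word).getLast? = some 1 := by
        rw [List.getLast?_append_of_ne_nil _ (by simp : (0 :: q'' : Word) ≠ [])] at hvlast
        exact hvlast
      exact ih j'' (by omega) q'' hvlen hvdep hlast''

end Main

open NCS in
/-- the module of coefficients of fixed weight `n` and depth `d` is
generated by the coefficients on "convergent" words `e0^{s_d-1}e1⋯e0^{s_1-1}e1`,
`s_d ≥ 2`. -/
theorem stmt_2 {K : Type*} [Field K] [CharZero K] (f : NCS K)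
    (hf0 : ∀ w : Word, shufApply f w [0] = 0)
    (hf1 : ∀ w : Word, shufApply f w [1] = 0) :
    ∀ n d : ℕ, 1 ≤ d → d ≤ n →
      Submodule.span ℤ {x : K | ∃ w : Word, w.length = n ∧ depth w = d ∧ x = f w}
        = Submodule.span ℤ {x : K | ∃ s : ℕ → ℕ,
            (∀ i, 1 ≤ i → i ≤ d → 1 ≤ s i) ∧ 2 ≤ s d ∧
            (∑ i ∈ Finset.Icc 1 d, s i) = n ∧ x = f (wordW d s)} := by
  
  intro n d hd hn
  have hf0' : ∀ w : Word, shufSum (f : Word → K) w [0] = 0 := fun w => hf0 w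
  have hf1' : ∀ w : Word, shufSum (f : Word → K) w [1] = 0 := fun w => hf1 w
  apply le_antisymm
  · rw [Submodule.span_le]
    rintro x ⟨w, hlen, hdep, rfl⟩
    have h1w : (1 : Fin 2) ∈ w := by
      have hpos : 0 < depth w := by rw [hdep]; omega
      simp only [depth] at hpos
      exact List.count_pos_iff.1 hpos
    obtain ⟨p, k, rfl⟩ := exists_split_last w h1w
    have hs1 := step1 (f : Word → K) hf0' n d k p hlen hdep
    have hle : Submodule.span ℤ {x : K | ∃ v : Word,
          v.length = n ∧ depth v = d ∧ v.getLast? = some 1 ∧ x = (f : Word → K) v}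
        ≤ Submodule.span ℤ {x : K | ∃ s : ℕ → ℕ,
            (∀ i, 1 ≤ i → i ≤ d → 1 ≤ s i) ∧ 2 ≤ s d ∧
            (∑ i ∈ Finset.Icc 1 d, s i) = n ∧ x = f (wordW d s)} := by
      rw [Submodule.span_le]
      rintro x ⟨v, hvlen, hvdep, hvlast, rfl⟩
      obtain ⟨j, r, rfl, hr⟩ := exists_split_ones v
      rcases hr with rfl | ⟨q, rfl⟩
      · have hj : 1 ≤ j := by
          rcases Nat.eq_zero_or_pos j with rfl | h
          · simp at hvlast
          · exact h
        have hz : (f : Word → K) (List.replicate j 1) = 0 := by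
          have := S_rep hf1' j hj []
          exact (S_nil_left (f : Word → K) (List.replicate j 1)).symm.trans this
        rw [SetLike.mem_coe, List.append_nil, hz]
        exact zero_mem _
      · rw [SetLike.mem_coe]
        have hvlast' : (0 :: q : Word).getLast? = some 1 := by
          rwa [List.getLast?_append_of_ne_nil _ (by simp : (0 :: q : Word) ≠ [])] at hvlast
        exact step2 (f : Word → K) hf1' n d hd hn j q hvlen hvdep hvlast'
    exact hle hs1
  · rw [Submodule.span_le]
    rintro x ⟨s, hs1, hs2, hsum, rfl⟩
    exact Submodule.subset_span ⟨wordW d s, by rw [wordW_length hs1, hsum], wordW_depth d s, rfl⟩
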